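/- For σ_R > 0 and k ∈ (0,1), the function x ↦ R(x,σ_R,k) attains its global maximum on ℝ exactly at the two points x = ±σ_R·k·√(2·ln(k²)/(k²−1)); that is, R(x,σ_R,k) ≤ R(x*,σ_R,k) for all x ∈ ℝ with x* = σ_R·k·√(2·ln(k²)/(k²−1)), with equality only for x = ±x*. -/

import Mathlib

open Real Set

/-- The ring filter: difference of two unnormalized Gaussians. -/
noncomputable def R (x σ k : ℝ) : ℝ :=
  Real.exp (-x ^ 2 / (2 * σ ^ 2)) - Real.exp (-x ^ 2 / (2 * (σ * k) ^ 2))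

lemma g_deriv (a b t : ℝ) :
    HasDerivAt (fun t => Real.exp (-(a*t)) - Real.exp (-(b*t)))
      (Real.exp (-(a*t)) * (-a) - Real.exp (-(b*t)) * (-b)) t := by
  have h1 : HasDerivAt (fun t : ℝ => -(a*t)) (-a) t := by
    simpa using (hasDerivAt_neg t).const_mul a
  have h2 : HasDerivAt (fun t : ℝ => -(b*t)) (-b) t := by
    simpa using (hasDerivAt_neg t).const_mul b
  exact (h1.exp).sub (h2.exp)

lemma g_max (a b : ℝ) (ha : 0 < a) (hab : a < b) (t : ℝ)
    (ht : t ≠ Real.log (b/a)/(b-a)) :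
    Real.exp (-(a*t)) - Real.exp (-(b*t)) <
      Real.exp (-(a*(Real.log (b/a)/(b-a)))) - Real.exp (-(b*(Real.log (b/a)/(b-a)))) := by
  have hb : 0 < b := ha.trans hab
  set T := Real.log (b/a)/(b-a) with hT
  set g : ℝ → ℝ := fun t => Real.exp (-(a*t)) - Real.exp (-(b*t)) with hg
  have hlog : Real.log (b/a) = Real.log b - Real.log a := Real.log_div hb.ne' ha.ne'
  have hba : 0 < b - a := by linarith
  have key : ∀ s : ℝ, (s < T → 0 < Real.exp (-(a*s)) * (-a) - Real.exp (-(b*s)) * (-b)) ∧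
      (T < s → Real.exp (-(a*s)) * (-a) - Real.exp (-(b*s)) * (-b) < 0) := by
    intro s
    have e1 : Real.exp (-(a*s)) * a = Real.exp (Real.log a - a*s) := by
      rw [show Real.log a - a*s = Real.log a + -(a*s) by ring, Real.exp_add,
        Real.exp_log ha, mul_comm]
    have e2 : Real.exp (-(b*s)) * b = Real.exp (Real.log b - b*s) := by
      rw [show Real.log b - b*s = Real.log b + -(b*s) by ring, Real.exp_add,
        Real.exp_log hb, mul_comm]
    constructor
    · intro h
      have h' : (b-a)*s < Real.log b - Real.log a := by
        rw [← hlog]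
        calc (b-a)*s < (b-a)*T := by exact (mul_lt_mul_iff_right₀ hba).2 h
        _ = Real.log (b/a) := by rw [hT]; field_simp [hba.ne']
      have : Real.exp (Real.log a - a*s) < Real.exp (Real.log b - b*s) :=
        Real.exp_lt_exp.2 (by linarith)
      rw [← e1, ← e2] at this
      nlinarith
    · intro h
      have h' : Real.log b - Real.log a < (b-a)*s := by
        rw [← hlog]
        calc Real.log (b/a) = (b-a)*T := by rw [hT]; field_simp [hba.ne']
        _ < (b-a)*s := by exact (mul_lt_mul_iff_right₀ hba).2 h
      have : Real.exp (Real.log b - b*s) < Real.exp (Real.log a - a*s) :=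
        Real.exp_lt_exp.2 (by linarith)
      rw [← e1, ← e2] at this
      nlinarith
  have hcont : Continuous g := by fun_prop
  rcases lt_or_gt_of_ne ht with h | h
  · have mono : StrictMonoOn g (Set.Iic T) := by
      apply strictMonoOn_of_deriv_pos (convex_Iic T) hcont.continuousOn
      intro s hs
      rw [interior_Iic] at hs
      rw [(g_deriv a b s).deriv]
      exact (key s).1 hs
    exact mono (Set.mem_Iic.2 h.le) (Set.mem_Iic.2 le_rfl) h
  · have anti : StrictAntiOn g (Set.Ici T) := by
      apply strictAntiOn_of_deriv_neg (convex_Ici T) hcont.continuousOn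
      intro s hs
      rw [interior_Ici] at hs
      rw [(g_deriv a b s).deriv]
      exact (key s).2 hs
    exact anti (Set.mem_Ici.2 le_rfl) (Set.mem_Ici.2 h.le) h

theorem R_global_max (σ k : ℝ) (hσ : 0 < σ) (hk : k ∈ Set.Ioo (0 : ℝ) 1) :
    (∀ x : ℝ, R x σ k ≤ R (σ * k * Real.sqrt (2 * Real.log (k ^ 2) / (k ^ 2 - 1))) σ k) ∧
    ∀ x : ℝ, R x σ k = R (σ * k * Real.sqrt (2 * Real.log (k ^ 2) / (k ^ 2 - 1))) σ k →
      x = σ * k * Real.sqrt (2 * Real.log (k ^ 2) / (k ^ 2 - 1)) ∨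
      x = -(σ * k * Real.sqrt (2 * Real.log (k ^ 2) / (k ^ 2 - 1))) := by
  obtain ⟨hk0, hk1⟩ := hk
  set a : ℝ := 1/(2*σ^2) with haDef
  set b : ℝ := 1/(2*(σ*k)^2) with hbDef
  have hσ0 : σ ≠ 0 := hσ.ne'
  have hk0' : k ≠ 0 := hk0.ne'
  have hk2 : 0 < k^2 := by positivity
  have hk2lt : k^2 < 1 := by nlinarith
  have ha : 0 < a := by positivity
  have hb : 0 < b := by positivity
  have hab : a < b := by
    rw [haDef, hbDef]
    rw [div_lt_div_iff₀ (by positivity) (by positivity)]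
    nlinarith [mul_pos (pow_pos hσ 2) (sub_pos.2 hk2lt)]
  -- sqrt argument is nonneg
  have hlogneg : Real.log (k^2) < 0 := Real.log_neg hk2 hk2lt
  have hs : 0 ≤ 2 * Real.log (k ^ 2) / (k ^ 2 - 1) := by
    apply le_of_lt
    apply div_pos_of_neg_of_neg (by linarith) (by linarith)
  set c : ℝ := σ * k * Real.sqrt (2 * Real.log (k ^ 2) / (k ^ 2 - 1)) with hc
  have hc2 : c^2 = Real.log (b/a)/(b-a) := by
    have h1 : c^2 = σ^2 * k^2 * (2 * Real.log (k ^ 2) / (k ^ 2 - 1)) := by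
      rw [hc, mul_pow, mul_pow, Real.sq_sqrt hs]
    have hba : b/a = (k^2)⁻¹ := by
      rw [hbDef, haDef]; field_simp
    have hlba : Real.log (b/a) = -Real.log (k^2) := by rw [hba, Real.log_inv]
    have hne : k^2 - 1 ≠ 0 := by linarith
    have hne2 : (1:ℝ) - k^2 ≠ 0 := by linarith
    have hbma : b - a = (1 - k^2)/(2*σ^2*k^2) := by
      rw [hbDef, haDef]; field_simp
    rw [h1, hlba, hbma]
    field_simp
    ring
  have hRform : ∀ x : ℝ, R x σ k = Real.exp (-(a*x^2)) - Real.exp (-(b*x^2)) := by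
    intro x
    unfold R
    congr 2
    · rw [haDef]; field_simp
    · rw [hbDef]; field_simp
  have hkey : ∀ x : ℝ, x^2 ≠ c^2 → R x σ k < R c σ k := by
    intro x hx
    rw [hRform x, hRform c, hc2]
    exact g_max a b ha hab (x^2) (by rw [← hc2]; exact hx)
  constructor
  · intro x
    by_cases hx : x^2 = c^2
    · rw [hRform x, hRform c, hx]
    · exact (hkey x hx).le
  · intro x hRx
    have hx2 : x^2 = c^2 := by
      by_contra hx
      exact absurd hRx (hkey x hx).ne
    have : (x - c) * (x + c) = 0 := by
      rw [show (x - c) * (x + c) = x^2 - c^2 by ring, hx2, sub_self]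
    rcases mul_eq_zero.1 this with h | h
    · left; linarith
    · right; linarith
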